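/- Let G be the Schreier graph of a free, totally ergodic, probability measure preserving action of Z on a standard probability space (V,ν), with respect to the generating set {+1, −1}. Then G does not admit a measurable perfect matching. -/

import Mathlib

open MeasureTheory

/-- The Schreier graph of a free, totally ergodic, pmp action of `ℤ` on a standard
probability space (generated by the map `T = "+1"`, generators `±1`) admits no
measurable perfect matching. A perfect matching is encoded by the measurable set
`A = {x : x is matched to T x}`; the perfect matching condition is that a.e. vertex
is incident to exactly one matched edge, i.e. `x ∈ A ↔ T x ∉ A` a.e. -/
theorem stmt_10 {V : Type*} [MeasurableSpace V] (ν : Measure V)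
    [IsProbabilityMeasure ν]
    (T : V → V) (hT : MeasurePreserving T ν ν) (hbij : Function.Bijective T)
    (herg : ∀ n : ℕ, n ≠ 0 → Ergodic (T^[n]) ν)
    (hfree : ∀ n : ℕ, n ≠ 0 → ∀ᵐ x ∂ν, T^[n] x ≠ x) :
    ¬ ∃ A : Set V, MeasurableSet A ∧ ∀ᵐ x ∂ν, (x ∈ A ↔ T x ∉ A) := by
  rintro ⟨A, hA, h⟩
  -- pull back the matching condition along T
  have h' : ∀ᵐ x ∂ν, (T x ∈ A ↔ T (T x) ∉ A) := by
    have := hT.quasiMeasurePreserving.ae h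
    exact this
  -- A is a.e. invariant under T^[2]
  have hinv : (T^[2]) ⁻¹' A =ᵐ[ν] A := by
    rw [Filter.eventuallyEq_set]
    filter_upwards [h, h'] with x hx hx'
    simp only [Set.mem_preimage, Function.iterate_succ, Function.iterate_one,
      Function.comp_apply, Function.iterate_zero, id]
    tauto
  have herg2 := (herg 2 (by norm_num)).quasiErgodic.ae_empty_or_univ₀
    hA.nullMeasurableSet hinv
  -- A is a.e. the complement of T⁻¹' A, so ν A = ν Aᶜ
  have hcompl : (Aᶜ : Set V) =ᵐ[ν] T ⁻¹' A := by
    rw [Filter.eventuallyEq_set]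
    filter_upwards [h] with x hx
    simp only [Set.mem_compl_iff, Set.mem_preimage]
    tauto
  have hmeasA : ν (T ⁻¹' A) = ν A := hT.measure_preimage hA.nullMeasurableSet
  have hAc : ν Aᶜ = ν A := (measure_congr hcompl).trans hmeasA
  rcases herg2 with h0 | h1
  · have : ν A = 0 := by simpa using measure_congr h0
    have h2 : ν Aᶜ = 1 := by
      rw [measure_compl hA (by simp [this]), this]; simp
    rw [hAc, this] at h2
    exact one_ne_zero h2.symm
  · have : ν A = 1 := by simpa using measure_congr h1
    have h2 : ν Aᶜ = 0 := by
      rw [measure_compl hA (by simp [this]), this]; simp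
    rw [hAc, this] at h2
    exact one_ne_zero h2
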